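/- Projective contraction: Given ε > 0, κ > 0, and g ∈ GL(m,ℝ) with σ(g) := s₂(g)/s₁(g) ≤ κ, the restriction of the projectivized map φ_g to the set of directions x̂ ∈ ℙ^{m−1} with |⟨x, v₋(g)⟩| ≥ ε has Lipschitz constant at most κ(1+ε)/ε², and this set is mapped into the ball of radius κ/ε around v₊(g). -/

import Mathlib

open scoped RealInnerProductSpace

private lemma aux_mul_cos_le_sin {x : ℝ} (h0 : 0 ≤ x) (h2 : x ≤ Real.pi / 2) :
    x * Real.cos x ≤ Real.sin x := by
  rcases eq_or_lt_of_le h0 with h | h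
  · simp [← h]
  rcases eq_or_lt_of_le h2 with h' | h'
  · rw [h', Real.cos_pi_div_two, Real.sin_pi_div_two]; norm_num
  · have hc : 0 < Real.cos x := Real.cos_pos_of_mem_Ioo ⟨by linarith [Real.pi_pos], h'⟩
    have := Real.lt_tan h h'
    rw [Real.tan_eq_sin_div_cos] at this
    calc x * Real.cos x ≤ (Real.sin x / Real.cos x) * Real.cos x :=
          mul_le_mul_of_nonneg_right this.le hc.le
      _ = Real.sin x := by field_simp

private lemma aux_one_add_cos {x : ℝ} (h0 : 0 ≤ x) (h2 : x ≤ Real.pi / 2) :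
    x * (1 + Real.cos x) ≤ 2 * Real.sin x := by
  have h0' : 0 ≤ x / 2 := by linarith
  have h2' : x / 2 ≤ Real.pi / 2 := by linarith [Real.pi_pos]
  have key := aux_mul_cos_le_sin h0' h2'
  have hc : 0 ≤ Real.cos (x / 2) := Real.cos_nonneg_of_mem_Icc ⟨by linarith [Real.pi_pos], h2'⟩
  have hcos : Real.cos x = 2 * Real.cos (x / 2) ^ 2 - 1 := by
    rw [show x = 2 * (x / 2) by ring, Real.cos_two_mul]; ring_nf
  have hsin : Real.sin x = 2 * Real.sin (x / 2) * Real.cos (x / 2) := by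
    rw [show x = 2 * (x / 2) by ring, Real.sin_two_mul]; ring_nf
  rw [hcos, hsin]
  nlinarith [mul_le_mul_of_nonneg_right key hc]

private lemma aux_sin_le {x : ℝ} (h : 0 ≤ x) : Real.sin x ≤ x := by
  rcases eq_or_lt_of_le h with h' | h'
  · simp [← h']
  · exact (Real.sin_lt h').le

set_option maxHeartbeats 8000000 in
theorem projective_contraction {m : ℕ}
    (g : EuclideanSpace ℝ (Fin m) →L[ℝ] EuclideanSpace ℝ (Fin m))
    (hg_inv : ∃ h, g.comp h = ContinuousLinearMap.id ℝ (EuclideanSpace ℝ (Fin m)) ∧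
      h.comp g = ContinuousLinearMap.id ℝ (EuclideanSpace ℝ (Fin m)))
    (vm vp : EuclideanSpace ℝ (Fin m)) (σg ε κ : ℝ)
    (hvm : ‖vm‖ = 1) (hvp : ‖vp‖ = 1)
    (hgv : g vm = ‖g‖ • vp)
    (hσ0 : 0 ≤ σg)
    (hsvd : ∀ w, ⟪vm, w⟫ = 0 → ⟪vp, g w⟫ = 0 ∧ ‖g w‖ ≤ σg * ‖g‖ * ‖w‖)
    (hε : 0 < ε) (hκ : 0 < κ) (hσκ : σg ≤ κ)
    (φ : EuclideanSpace ℝ (Fin m) → EuclideanSpace ℝ (Fin m))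
    (hφ : ∀ p, φ p = ‖g p‖⁻¹ • g p)
    (dproj : EuclideanSpace ℝ (Fin m) → EuclideanSpace ℝ (Fin m) → ℝ)
    (hdproj : ∀ p q, dproj p q = Real.arccos |⟪p, q⟫|) :
    (∀ p q : EuclideanSpace ℝ (Fin m), ‖p‖ = 1 → ‖q‖ = 1 →
      ε ≤ |⟪p, vm⟫| → ε ≤ |⟪q, vm⟫| →
      dproj (φ p) (φ q) ≤ κ * (1 + ε) / ε ^ 2 * dproj p q) ∧
    (∀ p : EuclideanSpace ℝ (Fin m), ‖p‖ = 1 → ε ≤ |⟪p, vm⟫| →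
      dproj (φ p) vp ≤ κ / ε) := by
  set G := ‖g‖ with hGdef
  set σ' := min σg 1 with hσ'def
  have hσ'0 : 0 ≤ σ' := le_min hσ0 zero_le_one
  have hσ'κ : σ' ≤ κ := le_trans (min_le_left _ _) hσκ
  have hσ'1 : σ' ≤ 1 := min_le_right _ _
  -- G > 0
  have hG : 0 < G := by
    obtain ⟨h, hgh, -⟩ := hg_inv
    have h1 : g (h vm) = vm := by
      have := ContinuousLinearMap.ext_iff.mp hgh vm
      simpa using this
    rcases (norm_nonneg g).eq_or_lt with h0 | h0
    · exfalso
      have hg0 : g = 0 := by rw [← norm_le_zero_iff, ← h0]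
      rw [hg0] at h1
      simp only [ContinuousLinearMap.zero_apply] at h1
      have hzz : ‖vm‖ = 0 := by simp [← h1]
      linarith [hvm, hzz]
    · exact h0
  -- improved svd bound
  have hbound : ∀ w : EuclideanSpace ℝ (Fin m), ⟪vm, w⟫ = 0 → ⟪vp, g w⟫ = 0 ∧ ‖g w‖ ≤ σ' * G * ‖w‖ := by
    intro w hw
    refine ⟨(hsvd w hw).1, ?_⟩
    rcases le_total σg 1 with hcc | hcc
    · rw [hσ'def, min_eq_left hcc]; exact (hsvd w hw).2
    · rw [hσ'def, min_eq_right hcc, one_mul]; exact g.le_opNorm w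
  -- Gram determinant bound on the complement
  have hgram : ∀ u w : EuclideanSpace ℝ (Fin m), ⟪vm, u⟫ = 0 → ⟪vm, w⟫ = 0 →
      ‖g u‖ ^ 2 * ‖g w‖ ^ 2 - ⟪g u, g w⟫ ^ 2 ≤
        (σ' * G) ^ 4 * (‖u‖ ^ 2 * ‖w‖ ^ 2 - ⟪u, w⟫ ^ 2) := by
    intro u w hu hw
    by_cases hu0 : u = 0
    · simp [hu0]
    have hu2 : (0 : ℝ) < ‖u‖ ^ 2 := pow_pos (norm_pos_iff.mpr hu0) 2
    set t := ⟪u, w⟫ / ‖u‖ ^ 2 with ht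
    have htu : t * ‖u‖ ^ 2 = ⟪u, w⟫ := by rw [ht]; exact div_mul_cancel₀ _ hu2.ne'
    set w' := w - t • u with hw'
    have hw'u : ⟪u, w'⟫ = 0 := by
      rw [hw', inner_sub_right, real_inner_smul_right, real_inner_self_eq_norm_sq]
      linarith [htu]
    have hw'vm : ⟪vm, w'⟫ = 0 := by
      rw [hw', inner_sub_right, real_inner_smul_right, hu, hw]; ring
    have hsplit : w = w' + t • u := by rw [hw']; abel
    have hnormw : ‖w‖ ^ 2 = ‖w'‖ ^ 2 + t ^ 2 * ‖u‖ ^ 2 := by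
      nth_rewrite 1 [hsplit]
      rw [norm_add_sq_real, real_inner_smul_right, real_inner_comm, hw'u, norm_smul,
        Real.norm_eq_abs, mul_pow, sq_abs]
      ring
    have hgw : g w = g w' + t • g u := by
      have := congrArg g hsplit
      simpa [map_add, map_smul] using this
    have hgwn : ‖g w‖ ^ 2 = ‖g w'‖ ^ 2 + 2 * t * ⟪g u, g w'⟫ + t ^ 2 * ‖g u‖ ^ 2 := by
      rw [hgw, norm_add_sq_real, real_inner_smul_right, real_inner_comm, norm_smul,
        Real.norm_eq_abs, mul_pow, sq_abs]
      ring
    have hgiw : ⟪g u, g w⟫ = ⟪g u, g w'⟫ + t * ‖g u‖ ^ 2 := by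
      rw [hgw, inner_add_right, real_inner_smul_right, real_inner_self_eq_norm_sq]
    have hgu : ‖g u‖ ≤ σ' * G * ‖u‖ := (hbound u hu).2
    have hgw' : ‖g w'‖ ≤ σ' * G * ‖w'‖ := (hbound w' hw'vm).2
    have h6 : ‖g u‖ ^ 2 ≤ (σ' * G) ^ 2 * ‖u‖ ^ 2 := by
      calc ‖g u‖ ^ 2 ≤ (σ' * G * ‖u‖) ^ 2 := pow_le_pow_left₀ (norm_nonneg _) hgu 2
        _ = (σ' * G) ^ 2 * ‖u‖ ^ 2 := by ring
    have h7 : ‖g w'‖ ^ 2 ≤ (σ' * G) ^ 2 * ‖w'‖ ^ 2 := by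
      calc ‖g w'‖ ^ 2 ≤ (σ' * G * ‖w'‖) ^ 2 := pow_le_pow_left₀ (norm_nonneg _) hgw' 2
        _ = (σ' * G) ^ 2 * ‖w'‖ ^ 2 := by ring
    have hprod : ‖g u‖ ^ 2 * ‖g w'‖ ^ 2 ≤ (σ' * G) ^ 4 * (‖u‖ ^ 2 * ‖w'‖ ^ 2) := by
      calc ‖g u‖ ^ 2 * ‖g w'‖ ^ 2 ≤ ((σ' * G) ^ 2 * ‖u‖ ^ 2) * ((σ' * G) ^ 2 * ‖w'‖ ^ 2) :=
            mul_le_mul h6 h7 (by positivity) (by positivity)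
        _ = (σ' * G) ^ 4 * (‖u‖ ^ 2 * ‖w'‖ ^ 2) := by ring
    have e2 : ‖u‖ ^ 2 * ‖w‖ ^ 2 - ⟪u, w⟫ ^ 2 = ‖u‖ ^ 2 * ‖w'‖ ^ 2 := by
      rw [hnormw, ← htu]; ring
    rw [e2]
    calc ‖g u‖ ^ 2 * ‖g w‖ ^ 2 - ⟪g u, g w⟫ ^ 2
        = ‖g u‖ ^ 2 * ‖g w'‖ ^ 2 - ⟪g u, g w'⟫ ^ 2 := by rw [hgwn, hgiw]; ring
      _ ≤ ‖g u‖ ^ 2 * ‖g w'‖ ^ 2 := by linarith [sq_nonneg ⟪g u, g w'⟫]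
      _ ≤ (σ' * G) ^ 4 * (‖u‖ ^ 2 * ‖w'‖ ^ 2) := hprod
  -- decomposition of a unit vector
  have hpt : ∀ p : EuclideanSpace ℝ (Fin m), ‖p‖ = 1 → ∃ (a : ℝ) (u : EuclideanSpace ℝ (Fin m)), p = a • vm + u ∧ ⟪vm, u⟫ = 0 ∧
      ⟪p, vm⟫ = a ∧ a ^ 2 + ‖u‖ ^ 2 = 1 ∧ g p = (a * G) • vp + g u ∧
      ‖g p‖ ^ 2 = (a * G) ^ 2 + ‖g u‖ ^ 2 ∧ ⟪g p, vp⟫ = a * G := by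
    intro p hp
    set a := ⟪vm, p⟫ with hadef
    set u := p - a • vm with hu
    have hvm2 : ⟪vm, vm⟫ = 1 := by
      rw [real_inner_self_eq_norm_sq, hvm]; norm_num
    have hvp2 : ⟪vp, vp⟫ = 1 := by
      rw [real_inner_self_eq_norm_sq, hvp]; norm_num
    have huvm : ⟪vm, u⟫ = 0 := by
      rw [hu, inner_sub_right, real_inner_smul_right, hvm2]; ring
    have hpu : p = a • vm + u := by rw [hu]; abel
    have hn : a ^ 2 + ‖u‖ ^ 2 = 1 := by
      have : ‖p‖ ^ 2 = 1 := by rw [hp]; norm_num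
      nth_rewrite 1 [hpu] at this
      rw [norm_add_sq_real, real_inner_smul_left, huvm, norm_smul, Real.norm_eq_abs,
        mul_pow, sq_abs, hvm] at this
      linarith [this]
    have hgpu : g p = (a * G) • vp + g u := by
      nth_rewrite 1 [hpu]
      rw [map_add, map_smul, hgv, smul_smul]
    have hipvp : ⟪vp, g u⟫ = 0 := (hbound u huvm).1
    refine ⟨a, u, hpu, huvm, real_inner_comm vm p, hn, hgpu, ?_, ?_⟩
    · rw [hgpu, norm_add_sq_real, real_inner_smul_left, hipvp, norm_smul, Real.norm_eq_abs,
        mul_pow, sq_abs, hvp]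
      ring
    · rw [hgpu, inner_add_left, real_inner_smul_left, hvp2, real_inner_comm, hipvp]
      ring
  constructor
  · -- Lipschitz part
    intro p q hp hq hpv hqv
    obtain ⟨a, u, hpu, hu, ha, hnp, hgp, hNp2, -⟩ := hpt p hp
    obtain ⟨b, w, hqw, hw, hb, hnq, hgq, hNq2, -⟩ := hpt q hq
    have hav : ε ≤ |a| := by rwa [ha] at hpv
    have hbv : ε ≤ |b| := by rwa [hb] at hqv
    have hNp0 : 0 < ‖g p‖ := by
      have ha0 : a ≠ 0 := by intro h; rw [h] at hav; simp at hav; linarith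
      have h2 : 0 < ‖g p‖ ^ 2 := by rw [hNp2]; positivity
      exact lt_of_pow_lt_pow_left₀ 2 (norm_nonneg _) (by simpa using h2)
    have hNq0 : 0 < ‖g q‖ := by
      have hb0 : b ≠ 0 := by intro h; rw [h] at hbv; simp at hbv; linarith
      have h2 : 0 < ‖g q‖ ^ 2 := by rw [hNq2]; positivity
      exact lt_of_pow_lt_pow_left₀ 2 (norm_nonneg _) (by simpa using h2)
    have hvp2 : ⟪vp, vp⟫ = 1 := by
      rw [real_inner_self_eq_norm_sq, hvp]; norm_num
    have hvm2 : ⟪vm, vm⟫ = 1 := by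
      rw [real_inner_self_eq_norm_sq, hvm]; norm_num
    have hI : ⟪g p, g q⟫ = (a * G) * (b * G) + ⟪g u, g w⟫ := by
      rw [hgp, hgq, inner_add_left, inner_add_right, inner_add_right,
        real_inner_smul_left, real_inner_smul_left, real_inner_smul_right,
        real_inner_smul_right, hvp2, (hbound w hw).1, real_inner_comm vp (g u),
        (hbound u hu).1]
      ring
    have hc : ⟪p, q⟫ = a * b + ⟪u, w⟫ := by
      nth_rewrite 1 [hpu, hqw]
      rw [inner_add_left, inner_add_right, inner_add_right,
        real_inner_smul_left, real_inner_smul_left, real_inner_smul_right,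
        real_inner_smul_right, hvm2, hw, real_inner_comm vm u, hu]
      ring
    -- key Gram bound
    have hkey : ‖g p‖ ^ 2 * ‖g q‖ ^ 2 - ⟪g p, g q⟫ ^ 2 ≤
        (σ' * G ^ 2) ^ 2 * (1 - ⟪p, q⟫ ^ 2) := by
      have hG1 := hgram u w hu hw
      have horth : ⟪vm, a • w - b • u⟫ = 0 := by
        rw [inner_sub_right, real_inner_smul_right, real_inner_smul_right, hu, hw]; ring
      have hT1 : ‖(a * G) • g w - (b * G) • g u‖ ^ 2 ≤
          (σ' * G ^ 2) ^ 2 * ‖a • w - b • u‖ ^ 2 := by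
        have heq : (a * G) • g w - (b * G) • g u = G • g (a • w - b • u) := by
          rw [map_sub, map_smul, map_smul, smul_sub, smul_smul, smul_smul,
            mul_comm G a, mul_comm G b]
        rw [heq, norm_smul, Real.norm_eq_abs, abs_of_nonneg hG.le]
        have h1 : ‖g (a • w - b • u)‖ ≤ σ' * G * ‖a • w - b • u‖ := (hbound _ horth).2
        calc (G * ‖g (a • w - b • u)‖) ^ 2 = G ^ 2 * ‖g (a • w - b • u)‖ ^ 2 := by ring
          _ ≤ G ^ 2 * (σ' * G * ‖a • w - b • u‖) ^ 2 :=
              mul_le_mul_of_nonneg_left (pow_le_pow_left₀ (norm_nonneg _) h1 2) (by positivity)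
          _ = (σ' * G ^ 2) ^ 2 * ‖a • w - b • u‖ ^ 2 := by ring
      have hOP : ‖(a * G) • g w - (b * G) • g u‖ ^ 2 =
          (a * G) ^ 2 * ‖g w‖ ^ 2 - 2 * ((a * G) * (b * G)) * ⟪g u, g w⟫
            + (b * G) ^ 2 * ‖g u‖ ^ 2 := by
        rw [norm_sub_sq_real, real_inner_smul_left, real_inner_smul_right,
          real_inner_comm (g w) (g u), norm_smul, norm_smul, Real.norm_eq_abs,
          Real.norm_eq_abs, mul_pow, mul_pow, sq_abs, sq_abs]
        ring
      have hOPuw : ‖a • w - b • u‖ ^ 2 =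
          a ^ 2 * ‖w‖ ^ 2 - 2 * (a * b) * ⟪u, w⟫ + b ^ 2 * ‖u‖ ^ 2 := by
        rw [norm_sub_sq_real, real_inner_smul_left, real_inner_smul_right,
          real_inner_comm w u, norm_smul, norm_smul, Real.norm_eq_abs,
          Real.norm_eq_abs, mul_pow, mul_pow, sq_abs, sq_abs]
        ring
      have hQCS : ⟪u, w⟫ ^ 2 ≤ ‖u‖ ^ 2 * ‖w‖ ^ 2 := by
        have h := abs_real_inner_le_norm u w
        calc ⟪u, w⟫ ^ 2 = |⟪u, w⟫| ^ 2 := (sq_abs _).symm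
          _ ≤ (‖u‖ * ‖w‖) ^ 2 := pow_le_pow_left₀ (abs_nonneg _) h 2
          _ = ‖u‖ ^ 2 * ‖w‖ ^ 2 := by ring
      have hgram2 : ‖g u‖ ^ 2 * ‖g w‖ ^ 2 - ⟪g u, g w⟫ ^ 2 ≤
          (σ' * G ^ 2) ^ 2 * (‖u‖ ^ 2 * ‖w‖ ^ 2 - ⟪u, w⟫ ^ 2) := by
        have h9 : σ' ^ 2 ≤ 1 := pow_le_one₀ hσ'0 hσ'1
        have h8 : (σ' * G) ^ 4 ≤ (σ' * G ^ 2) ^ 2 := by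
          calc (σ' * G) ^ 4 = σ' ^ 2 * (σ' ^ 2 * G ^ 4) := by ring
            _ ≤ 1 * (σ' ^ 2 * G ^ 4) := mul_le_mul_of_nonneg_right h9 (by positivity)
            _ = (σ' * G ^ 2) ^ 2 := by ring
        exact le_trans hG1 (mul_le_mul_of_nonneg_right h8 (by linarith [hQCS]))
      rw [hOP] at hT1
      rw [hOPuw] at hT1
      have hid : 1 - (a * b + ⟪u, w⟫) ^ 2 =
          (a ^ 2 * ‖w‖ ^ 2 - 2 * (a * b) * ⟪u, w⟫ + b ^ 2 * ‖u‖ ^ 2)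
            + (‖u‖ ^ 2 * ‖w‖ ^ 2 - ⟪u, w⟫ ^ 2) := by
        linear_combination (-(b ^ 2 + ‖w‖ ^ 2)) * hnp - hnq
      rw [hI, hc, hNp2, hNq2, hid]
      calc ((a * G) ^ 2 + ‖g u‖ ^ 2) * ((b * G) ^ 2 + ‖g w‖ ^ 2)
            - ((a * G) * (b * G) + ⟪g u, g w⟫) ^ 2
          = ((a * G) ^ 2 * ‖g w‖ ^ 2 - 2 * ((a * G) * (b * G)) * ⟪g u, g w⟫
              + (b * G) ^ 2 * ‖g u‖ ^ 2) + (‖g u‖ ^ 2 * ‖g w‖ ^ 2 - ⟪g u, g w⟫ ^ 2) := by ring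
        _ ≤ (σ' * G ^ 2) ^ 2 * (a ^ 2 * ‖w‖ ^ 2 - 2 * (a * b) * ⟪u, w⟫ + b ^ 2 * ‖u‖ ^ 2)
              + (σ' * G ^ 2) ^ 2 * (‖u‖ ^ 2 * ‖w‖ ^ 2 - ⟪u, w⟫ ^ 2) := add_le_add hT1 hgram2
        _ = (σ' * G ^ 2) ^ 2 * ((a ^ 2 * ‖w‖ ^ 2 - 2 * (a * b) * ⟪u, w⟫ + b ^ 2 * ‖u‖ ^ 2)
              + (‖u‖ ^ 2 * ‖w‖ ^ 2 - ⟪u, w⟫ ^ 2)) := by ring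
    -- set up angles
    rw [hdproj, hdproj, hφ p, hφ q]
    have hCval : ⟪(‖g p‖⁻¹ • g p : EuclideanSpace ℝ (Fin m)), (‖g q‖⁻¹ • g q : EuclideanSpace ℝ (Fin m))⟫ =
        ‖g p‖⁻¹ * (‖g q‖⁻¹ * ⟪g p, g q⟫) := by
      rw [real_inner_smul_left, real_inner_smul_right]
    rw [hCval]
    set C := ‖g p‖⁻¹ * (‖g q‖⁻¹ * ⟪g p, g q⟫) with hCdef
    set D := Real.arccos |C| with hDdef
    set d := Real.arccos |⟪p, q⟫| with hddef
    have hD0 : 0 ≤ D := Real.arccos_nonneg _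
    have hd0 : 0 ≤ d := Real.arccos_nonneg _
    have hDpi : D ≤ Real.pi / 2 := Real.arccos_le_pi_div_two.mpr (abs_nonneg _)
    have hCNN : C * (‖g p‖ * ‖g q‖) = ⟪g p, g q⟫ := by
      rw [hCdef]; field_simp
    have hIle : |⟪g p, g q⟫| ≤ ‖g p‖ * ‖g q‖ := abs_real_inner_le_norm _ _
    have habsC : |C| ≤ 1 := by
      have h1 : |C| * (‖g p‖ * ‖g q‖) = |⟪g p, g q⟫| := by
        rw [← abs_of_pos (mul_pos hNp0 hNq0), ← abs_mul, hCNN]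
      have h2 : |C| * (‖g p‖ * ‖g q‖) ≤ 1 * (‖g p‖ * ‖g q‖) := by
        rw [h1, one_mul]; exact hIle
      exact le_of_mul_le_mul_right h2 (mul_pos hNp0 hNq0)
    have hcle : |⟪p, q⟫| ≤ 1 := by
      have := abs_real_inner_le_norm p q
      rwa [hp, hq, one_mul] at this
    have hC2le : C ^ 2 ≤ 1 := by
      have h := pow_le_pow_left₀ (abs_nonneg C) habsC 2
      rwa [sq_abs, one_pow] at h
    have hc2le : ⟪p, q⟫ ^ 2 ≤ 1 := by
      have h := pow_le_pow_left₀ (abs_nonneg ⟪p, q⟫) hcle 2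
      rwa [sq_abs, one_pow] at h
    have hcosD : Real.cos D * (‖g p‖ * ‖g q‖) = |⟪g p, g q⟫| := by
      rw [hDdef, Real.cos_arccos (by linarith [abs_nonneg C]) habsC,
        ← abs_of_pos (mul_pos hNp0 hNq0), ← abs_mul, hCNN]
    -- sin D bound
    have hsinD0 : 0 ≤ Real.sin D := by
      rw [hDdef, Real.sin_arccos]; positivity
    have hsind0 : 0 ≤ Real.sin d := by
      rw [hddef, Real.sin_arccos]; positivity
    have hsinD2 : Real.sin D ^ 2 = 1 - C ^ 2 := by
      rw [hDdef, Real.sin_arccos, sq_abs, Real.sq_sqrt (by linarith [hC2le] : (0:ℝ) ≤ 1 - C ^ 2)]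
    have hsind2 : Real.sin d ^ 2 = 1 - ⟪p, q⟫ ^ 2 := by
      rw [hddef, Real.sin_arccos, sq_abs,
        Real.sq_sqrt (by linarith [hc2le] : (0:ℝ) ≤ 1 - ⟪p, q⟫ ^ 2)]
    have hsinD : Real.sin D * (‖g p‖ * ‖g q‖) ≤ σ' * G ^ 2 * Real.sin d := by
      have hA0 : 0 ≤ Real.sin D * (‖g p‖ * ‖g q‖) := by positivity
      have hB0 : 0 ≤ σ' * G ^ 2 * Real.sin d := by positivity
      have hsq : (Real.sin D * (‖g p‖ * ‖g q‖)) ^ 2 ≤ (σ' * G ^ 2 * Real.sin d) ^ 2 := by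
        have e1 : (Real.sin D * (‖g p‖ * ‖g q‖)) ^ 2 =
            ‖g p‖ ^ 2 * ‖g q‖ ^ 2 - ⟪g p, g q⟫ ^ 2 := by
          rw [mul_pow, hsinD2, ← hCNN]; ring
        have e2 : (σ' * G ^ 2 * Real.sin d) ^ 2 = (σ' * G ^ 2) ^ 2 * (1 - ⟪p, q⟫ ^ 2) := by
          rw [mul_pow, hsind2]
        rw [e1, e2]; exact hkey
      calc Real.sin D * (‖g p‖ * ‖g q‖)
          = Real.sqrt ((Real.sin D * (‖g p‖ * ‖g q‖)) ^ 2) := (Real.sqrt_sq hA0).symm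
        _ ≤ Real.sqrt ((σ' * G ^ 2 * Real.sin d) ^ 2) := Real.sqrt_le_sqrt hsq
        _ = σ' * G ^ 2 * Real.sin d := Real.sqrt_sq hB0
    -- lower bound on ‖gp‖‖gq‖ + |I|
    have hNN : 2 * (ε ^ 2 * G ^ 2) ≤ ‖g p‖ * ‖g q‖ + |⟪g p, g q⟫| := by
      have hXY : |⟪g u, g w⟫| ≤ ‖g u‖ * ‖g w‖ := abs_real_inner_le_norm _ _
      have hIl : |a * G| * |b * G| - |⟪g u, g w⟫| ≤ |⟪g p, g q⟫| := by
        have h := abs_add_le ((a * G) * (b * G) + ⟪g u, g w⟫) (-⟪g u, g w⟫)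
        rw [hI]
        have h2 : |(a * G) * (b * G)| = |a * G| * |b * G| := abs_mul _ _
        simp only [add_neg_cancel_right] at h
        rw [abs_neg] at h
        linarith [h2 ▸ h]
      have hNNge : |a * G| * |b * G| + ‖g u‖ * ‖g w‖ ≤ ‖g p‖ * ‖g q‖ := by
        have hs : (|a * G| * |b * G| + ‖g u‖ * ‖g w‖) ^ 2 ≤ (‖g p‖ * ‖g q‖) ^ 2 := by
          rw [mul_pow, hNp2, hNq2, ← sq_abs (a * G), ← sq_abs (b * G)]
          have key2 : (|a * G| ^ 2 + ‖g u‖ ^ 2) * (|b * G| ^ 2 + ‖g w‖ ^ 2)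
              - (|a * G| * |b * G| + ‖g u‖ * ‖g w‖) ^ 2
              = (|a * G| * ‖g w‖ - |b * G| * ‖g u‖) ^ 2 := by ring
          linarith [key2, sq_nonneg (|a * G| * ‖g w‖ - |b * G| * ‖g u‖)]
        have hS0 : 0 ≤ |a * G| * |b * G| + ‖g u‖ * ‖g w‖ := by positivity
        calc |a * G| * |b * G| + ‖g u‖ * ‖g w‖
            = Real.sqrt ((|a * G| * |b * G| + ‖g u‖ * ‖g w‖) ^ 2) := (Real.sqrt_sq hS0).symm
          _ ≤ Real.sqrt ((‖g p‖ * ‖g q‖) ^ 2) := Real.sqrt_le_sqrt hs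
          _ = ‖g p‖ * ‖g q‖ := Real.sqrt_sq (by positivity)
      have haG : ε * G ≤ |a * G| := by
        rw [abs_mul, abs_of_nonneg hG.le]
        exact mul_le_mul_of_nonneg_right hav hG.le
      have hbG : ε * G ≤ |b * G| := by
        rw [abs_mul, abs_of_nonneg hG.le]
        exact mul_le_mul_of_nonneg_right hbv hG.le
      have hab2 : ε ^ 2 * G ^ 2 ≤ |a * G| * |b * G| := by
        calc ε ^ 2 * G ^ 2 = (ε * G) * (ε * G) := by ring
          _ ≤ |a * G| * |b * G| :=
              mul_le_mul haG hbG (by positivity) (abs_nonneg _)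
      linarith [hIl, hNNge, hXY]
    -- conclude
    have hmain := aux_one_add_cos hD0 hDpi
    have hstep : D * (‖g p‖ * ‖g q‖ + |⟪g p, g q⟫|) ≤ 2 * (σ' * G ^ 2 * Real.sin d) := by
      have h1 := mul_le_mul_of_nonneg_right hmain (le_of_lt (mul_pos hNp0 hNq0))
      calc D * (‖g p‖ * ‖g q‖ + |⟪g p, g q⟫|)
          = D * (1 + Real.cos D) * (‖g p‖ * ‖g q‖) := by rw [← hcosD]; ring
        _ ≤ 2 * Real.sin D * (‖g p‖ * ‖g q‖) := h1
        _ = 2 * (Real.sin D * (‖g p‖ * ‖g q‖)) := by ring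
        _ ≤ 2 * (σ' * G ^ 2 * Real.sin d) := by linarith [hsinD]
    have hfinal : D * ε ^ 2 ≤ σ' * d := by
      have h2 : D * (2 * (ε ^ 2 * G ^ 2)) ≤ D * (‖g p‖ * ‖g q‖ + |⟪g p, g q⟫|) :=
        mul_le_mul_of_nonneg_left hNN hD0
      have h3 : Real.sin d ≤ d := aux_sin_le hd0
      have hsd : σ' * G ^ 2 * Real.sin d ≤ σ' * G ^ 2 * d :=
        mul_le_mul_of_nonneg_left h3 (by positivity)
      have h5 : (D * ε ^ 2) * (2 * G ^ 2) ≤ (σ' * d) * (2 * G ^ 2) := by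
        linarith [h2, hstep, hsd]
      exact le_of_mul_le_mul_right h5 (by positivity)
    rw [div_mul_eq_mul_div, le_div_iff₀ (by positivity : (0:ℝ) < ε ^ 2)]
    have t1 : σ' * d ≤ κ * d := mul_le_mul_of_nonneg_right hσ'κ hd0
    have t2 : κ * d ≤ κ * (1 + ε) * d := by
      have h0 : 0 ≤ κ * ε * d := by positivity
      linarith [h0]
    linarith [hfinal, t1, t2]
  · -- ball part
    intro p hp hpv
    obtain ⟨a, u, hpu, hu, ha, hnp, hgp, hNp2, hip⟩ := hpt p hp
    have hav : ε ≤ |a| := by rwa [ha] at hpv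
    have ha0 : a ≠ 0 := by intro h; rw [h] at hav; simp at hav; linarith
    have hNp0 : 0 < ‖g p‖ := by
      have h2 : 0 < ‖g p‖ ^ 2 := by rw [hNp2]; positivity
      exact lt_of_pow_lt_pow_left₀ 2 (norm_nonneg _) (by simpa using h2)
    rw [hdproj, hφ p]
    have hC2 : ⟪(‖g p‖⁻¹ • g p : EuclideanSpace ℝ (Fin m)), vp⟫ = ‖g p‖⁻¹ * (a * G) := by
      rw [real_inner_smul_left, hip]
    rw [hC2]
    set C := ‖g p‖⁻¹ * (a * G) with hCdef
    set D := Real.arccos |C| with hDdef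
    have hD0 : 0 ≤ D := Real.arccos_nonneg _
    have hDpi : D ≤ Real.pi / 2 := Real.arccos_le_pi_div_two.mpr (abs_nonneg _)
    have hCNN : C * ‖g p‖ = a * G := by rw [hCdef]; field_simp
    have haGle : (a * G) ^ 2 ≤ ‖g p‖ ^ 2 := by
      rw [hNp2]; linarith [sq_nonneg ‖g u‖]
    have habsC : |C| ≤ 1 := by
      have h1 : |C| * ‖g p‖ = |a * G| := by
        rw [← abs_of_pos hNp0, ← abs_mul, hCNN]
      have h2 : |a * G| ≤ ‖g p‖ := by
        calc |a * G| = Real.sqrt ((a * G) ^ 2) := (Real.sqrt_sq_eq_abs _).symm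
          _ ≤ Real.sqrt (‖g p‖ ^ 2) := Real.sqrt_le_sqrt haGle
          _ = ‖g p‖ := Real.sqrt_sq (norm_nonneg _)
      have h3 : |C| * ‖g p‖ ≤ 1 * ‖g p‖ := by rw [h1, one_mul]; exact h2
      exact le_of_mul_le_mul_right h3 hNp0
    have hcosD : Real.cos D * ‖g p‖ = |a * G| := by
      rw [hDdef, Real.cos_arccos (by linarith [abs_nonneg C]) habsC,
        ← abs_of_pos hNp0, ← abs_mul, hCNN]
    have hsinD : Real.sin D * ‖g p‖ = ‖g u‖ := by
      have hsq : Real.sin D ^ 2 = 1 - C ^ 2 := by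
        have hC2le : C ^ 2 ≤ 1 := by
          have h := pow_le_pow_left₀ (abs_nonneg C) habsC 2
          rwa [sq_abs, one_pow] at h
        rw [hDdef, Real.sin_arccos, sq_abs,
          Real.sq_sqrt (by linarith [hC2le] : (0:ℝ) ≤ 1 - C ^ 2)]
      have hs0 : 0 ≤ Real.sin D := by
        rw [hDdef, Real.sin_arccos]; positivity
      have h1 : (Real.sin D * ‖g p‖) ^ 2 = ‖g u‖ ^ 2 := by
        rw [mul_pow, hsq]
        have h2 : C ^ 2 * ‖g p‖ ^ 2 = (a * G) ^ 2 := by rw [← mul_pow, hCNN]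
        linear_combination hNp2 - h2
      calc Real.sin D * ‖g p‖
          = Real.sqrt ((Real.sin D * ‖g p‖) ^ 2) := (Real.sqrt_sq (mul_nonneg hs0 hNp0.le)).symm
        _ = Real.sqrt (‖g u‖ ^ 2) := by rw [h1]
        _ = ‖g u‖ := Real.sqrt_sq (norm_nonneg _)
    have hlem := aux_mul_cos_le_sin hD0 hDpi
    have hgub : ‖g u‖ ≤ σ' * G := by
      have h1 : ‖g u‖ ≤ σ' * G * ‖u‖ := (hbound u hu).2
      have h2 : ‖u‖ ≤ 1 := by
        have h3 : ‖u‖ ^ 2 ≤ 1 := by linarith [sq_nonneg a]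
        calc ‖u‖ = Real.sqrt (‖u‖ ^ 2) := (Real.sqrt_sq (norm_nonneg u)).symm
          _ ≤ Real.sqrt 1 := Real.sqrt_le_sqrt h3
          _ = 1 := Real.sqrt_one
      calc ‖g u‖ ≤ σ' * G * ‖u‖ := h1
        _ ≤ σ' * G * 1 := mul_le_mul_of_nonneg_left h2 (by positivity)
        _ = σ' * G := by ring
    have hcore : D * |a * G| ≤ σ' * G := by
      have := mul_le_mul_of_nonneg_right hlem hNp0.le
      calc D * |a * G| = D * (Real.cos D * ‖g p‖) := by rw [hcosD]
        _ = D * Real.cos D * ‖g p‖ := by ring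
        _ ≤ Real.sin D * ‖g p‖ := this
        _ = ‖g u‖ := hsinD
        _ ≤ σ' * G := hgub
    rw [le_div_iff₀ hε]
    have haG2 : ε * G ≤ |a * G| := by
      rw [abs_mul, abs_of_nonneg hG.le]
      exact mul_le_mul_of_nonneg_right hav hG.le
    have h5 : D * (ε * G) ≤ σ' * G := le_trans (mul_le_mul_of_nonneg_left haG2 hD0) hcore
    have h6 : (D * ε) * G ≤ σ' * G := by linarith [h5]
    have h7 : D * ε ≤ σ' := le_of_mul_le_mul_right h6 hG
    linarith [h7, hσ'κ]
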